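/- Let n_x, n_y be real numbers with n_x² + n_y² = 1, and let B₁ and B₂ be the real symmetric 5×5 matrices whose only nonzero entries are B₁(1,4) = B₁(4,1) = B₁(3,5) = B₁(5,3) = -1 and B₂(2,5) = B₂(5,2) = B₂(3,4) = B₂(4,3) = -1. Then the characteristic polynomial of B_n = n_x B₁ + n_y B₂ equals X (X² - (1 + n_x n_y)) (X² - (1 - n_x n_y)); in particular B_n has the two positive eigenvalues √(1 + n_x n_y) and √(1 - n_x n_y), the two negative eigenvalues -√(1 + n_x n_y) and -√(1 - n_x n_y), and the eigenvalue 0. -/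

import Mathlib

open Matrix Polynomial

set_option maxHeartbeats 1600000

lemma mem_spectrum_of_charpoly_root {n : Type*} [Fintype n] [DecidableEq n]
    (M : Matrix n n ℝ) (μ : ℝ) (h : M.charpoly.eval μ = 0) : μ ∈ spectrum ℝ M := by
  rw [spectrum.mem_iff]
  intro hu
  rw [Matrix.isUnit_iff_isUnit_det, isUnit_iff_ne_zero] at hu
  apply hu
  rw [Matrix.charpoly, eval_det, Matrix.matPolyEquiv_charmatrix] at h
  simpa [Matrix.scalar, algebraMap, Algebra.algebraMap] using h

/-- Eigenvalue structure of the 2D isotropic elastodynamics system: for a unit direction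
`n = (n_x, n_y)` and the symmetric coefficient matrices `B₁`, `B₂` of the stress-velocity
form, the matrix `B_n = n_x B₁ + n_y B₂` has characteristic polynomial
`X (X² - (1 + n_x n_y)) (X² - (1 - n_x n_y))`; in particular it has the two positive
eigenvalues `√(1 ± n_x n_y)`, the two negative eigenvalues `-√(1 ± n_x n_y)`, and the
eigenvalue `0`. -/
theorem elastodynamics_paired_eigenvalues (nx ny : ℝ) (hn : nx ^ 2 + ny ^ 2 = 1) :
    let B₁ : Matrix (Fin 5) (Fin 5) ℝ :=
      !![0, 0, 0, -1, 0;
         0, 0, 0, 0, 0;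
         0, 0, 0, 0, -1;
         -1, 0, 0, 0, 0;
         0, 0, -1, 0, 0]
    let B₂ : Matrix (Fin 5) (Fin 5) ℝ :=
      !![0, 0, 0, 0, 0;
         0, 0, 0, 0, -1;
         0, 0, 0, -1, 0;
         0, 0, -1, 0, 0;
         0, -1, 0, 0, 0]
    let Bn := nx • B₁ + ny • B₂
    Bn.charpoly = X * (X ^ 2 - C (1 + nx * ny)) * (X ^ 2 - C (1 - nx * ny)) ∧
      0 < Real.sqrt (1 + nx * ny) ∧ 0 < Real.sqrt (1 - nx * ny) ∧
      Real.sqrt (1 + nx * ny) ∈ spectrum ℝ Bn ∧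
      Real.sqrt (1 - nx * ny) ∈ spectrum ℝ Bn ∧
      -Real.sqrt (1 + nx * ny) ∈ spectrum ℝ Bn ∧
      -Real.sqrt (1 - nx * ny) ∈ spectrum ℝ Bn ∧
      (0 : ℝ) ∈ spectrum ℝ Bn := by
  intro B₁ B₂ Bn
  have hp : (0 : ℝ) < 1 + nx * ny := by nlinarith [sq_nonneg (nx + ny)]
  have hm : (0 : ℝ) < 1 - nx * ny := by nlinarith [sq_nonneg (nx - ny)]
  have hcp : Bn.charpoly = X * (X ^ 2 - C (1 + nx * ny)) * (X ^ 2 - C (1 - nx * ny)) := by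
    have h : charmatrix Bn =
        !![X, 0, 0, C nx, 0;
           0, X, 0, 0, C ny;
           0, 0, X, C ny, C nx;
           C nx, 0, C ny, X, 0;
           0, C ny, C nx, 0, X] := by
      ext i j : 2
      fin_cases i <;> fin_cases j <;>
        simp [Bn, B₁, B₂, charmatrix_apply, Matrix.one_apply, vecHead, vecTail]
    rw [Matrix.charpoly, h]
    simp [Matrix.det_succ_row_zero, Fin.sum_univ_succ, Fin.succAbove]
    have hC : (C nx) ^ 2 + (C ny) ^ 2 = (1 : ℝ[X]) := by
      rw [← map_pow, ← map_pow, ← map_add, hn, Polynomial.C_1]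
    linear_combination (X * ((C nx) ^ 2 + (C ny) ^ 2 + 1) - 2 * X ^ 3) * hC
  have root : ∀ μ : ℝ, μ * (μ ^ 2 - (1 + nx * ny)) * (μ ^ 2 - (1 - nx * ny)) = 0 →
      μ ∈ spectrum ℝ Bn := by
    intro μ hμ
    apply mem_spectrum_of_charpoly_root
    rw [hcp]
    simpa using hμ
  have sp : Real.sqrt (1 + nx * ny) ^ 2 = 1 + nx * ny := Real.sq_sqrt hp.le
  have sm : Real.sqrt (1 - nx * ny) ^ 2 = 1 - nx * ny := Real.sq_sqrt hm.le
  refine ⟨hcp, Real.sqrt_pos.mpr hp, Real.sqrt_pos.mpr hm, ?_, ?_, ?_, ?_, ?_⟩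
  · exact root _ (by rw [sp]; ring)
  · exact root _ (by rw [sm]; ring)
  · exact root _ (by rw [neg_pow, sp]; ring)
  · exact root _ (by rw [neg_pow, sm]; ring)
  · exact root _ (by ring)
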